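/- Let (Ω, P) be a probability space and let D_2, D_3, D_4, … : Ω → ℝ be square-integrable random variables whose autocovariances are absolutely summable, i.e., there exists a constant C such that Σ_{i=2}^{t} Σ_{j=2}^{t} |Cov(D_i, D_j)| ≤ C for every t ≥ 2. For each t ≥ 2, let r̂_t := Σ_{i=2}^{t} μ̂^{(t)}_i · D_i, where μ̂^{(t)}_i are the OLS fitting-window weights with window size δ = t (window {1, …, t}). Then the variance of the estimator vanishes asymptotically: Var(r̂_t) → 0 as t → ∞. -/

import Mathlib

open MeasureTheory

/-- The OLS fitting-window weight
`μ̂_{t⁻} = (Σ_{i=t⁻}^{t} (i − (2t−δ+1)/2)) /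
          (Σ_{i=t−δ+1}^{t} (i − (t−δ+1))·(i − (2t−δ+1)/2))`,
for a fitting window of size `δ` ending at day `t`, with arithmetic in `ℝ`. -/
noncomputable def olsWeight (t : ℤ) (δ : ℕ) (tm : ℤ) : ℝ :=
  (∑ i ∈ Finset.Icc tm t, ((i : ℝ) - (2 * (t : ℝ) - (δ : ℝ) + 1) / 2)) /
  (∑ i ∈ Finset.Icc (t - (δ : ℤ) + 1) t,
    ((i : ℝ) - ((t : ℝ) - (δ : ℝ) + 1)) * ((i : ℝ) - (2 * (t : ℝ) - (δ : ℝ) + 1) / 2))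

/-- Covariance: `Cov(U, V) = E[(U − E[U])·(V − E[V])]`. -/
noncomputable def cov {Ω : Type*} [MeasurableSpace Ω] (P : Measure Ω) (U V : Ω → ℝ) : ℝ :=
  ∫ ω, (U ω - ∫ x, U x ∂P) * (V ω - ∫ x, V x ∂P) ∂P

lemma sum_range_cast (n : ℕ) : ∑ i ∈ Finset.range n, (i:ℝ) = n*(n-1)/2 := by
  induction n with
  | zero => simp
  | succ n ih => rw [Finset.sum_range_succ, ih]; push_cast; ring

lemma sum_range_cast_sq (n : ℕ) : ∑ i ∈ Finset.range n, (i:ℝ)^2 = n*(n-1)*(2*n-1)/6 := by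
  induction n with
  | zero => simp
  | succ n ih => rw [Finset.sum_range_succ, ih]; push_cast; ring

lemma Icc_int_succ (a b : ℤ) (h : a ≤ b + 1) :
    Finset.Icc a (b+1) = insert (b+1) (Finset.Icc a b) := by
  ext x; simp [Finset.mem_Icc]; omega

lemma sum_Icc_int (f : ℤ → ℝ) (a : ℤ) (n : ℕ) :
    ∑ i ∈ Finset.Icc a (a + n), f i = ∑ k ∈ Finset.range (n+1), f (a + k) := by
  induction n with
  | zero => simp
  | succ n ih =>
    have : a + ((n:ℤ)+1) = (a + n) + 1 := by ring
    push_cast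
    rw [this, Icc_int_succ a (a+n) (by omega), Finset.sum_insert (by simp [Finset.mem_Icc]),
      Finset.sum_range_succ, ih]
    push_cast
    ring_nf

lemma olsWeight_eq (t i : ℕ) (ht : 2 ≤ t) (hi : 2 ≤ i) (hit : i ≤ t) :
    olsWeight t t i = 6 * ((t:ℝ) - i + 1) * ((i:ℝ) - 1) / (((t:ℝ)-1)*t*((t:ℝ)+1)) := by
  have hd1 : ((t:ℤ) - (t:ℕ) + 1) = 1 := by push_cast; ring
  have hnum : ∑ j ∈ Finset.Icc (i:ℤ) (t:ℤ),
      (((j:ℤ) : ℝ) - (2 * ((t:ℤ) : ℝ) - ((t:ℕ) : ℝ) + 1) / 2)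
      = ((t:ℝ) - i + 1) * ((i:ℝ) - 1) / 2 := by
    have h1 : (t:ℤ) = (i:ℤ) + ((t - i : ℕ) : ℤ) := by push_cast; omega
    rw [h1, sum_Icc_int]
    have h2 : ∀ k ∈ Finset.range (t - i + 1),
        ((((i:ℤ) + (k:ℕ) : ℤ)) : ℝ) - (2 * ((((i:ℤ) + ((t-i:ℕ):ℤ)) : ℤ) : ℝ) - ((t:ℕ) : ℝ) + 1) / 2
          = (k:ℝ) + ((i:ℝ) - ((t:ℝ) + 1) / 2) := by
      intro k _
      have h3 : ((t - i : ℕ) : ℝ) = (t:ℝ) - i := by push_cast [Nat.cast_sub hit]; ring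
      push_cast [h3]; ring
    rw [Finset.sum_congr rfl h2, Finset.sum_add_distrib, sum_range_cast, Finset.sum_const,
      Finset.card_range, nsmul_eq_mul]
    have h3 : ((t - i : ℕ) : ℝ) = (t:ℝ) - i := by push_cast [Nat.cast_sub hit]; ring
    push_cast [h3]
    ring
  have hden : ∑ j ∈ Finset.Icc ((t:ℤ) - (t:ℕ) + 1) (t:ℤ),
      (((j:ℤ) : ℝ) - (((t:ℤ) : ℝ) - ((t:ℕ) : ℝ) + 1)) *
        (((j:ℤ) : ℝ) - (2 * ((t:ℤ) : ℝ) - ((t:ℕ) : ℝ) + 1) / 2)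
      = ((t:ℝ)-1)*t*((t:ℝ)+1)/12 := by
    rw [hd1]
    have h1 : (t:ℤ) = (1:ℤ) + ((t - 1 : ℕ) : ℤ) := by push_cast; omega
    rw [h1, sum_Icc_int]
    have h4 : t - 1 + 1 = t := by omega
    rw [h4]
    have h3 : ((t - 1 : ℕ) : ℝ) = (t:ℝ) - 1 := by push_cast [Nat.cast_sub (by omega : 1 ≤ t)]; ring
    have h2 : ∀ k ∈ Finset.range t,
        (((((1:ℤ) + (k:ℕ) : ℤ)) : ℝ) - (((((1:ℤ) + ((t-1:ℕ):ℤ)) : ℤ) : ℝ) - ((t:ℕ) : ℝ) + 1)) *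
          (((((1:ℤ) + (k:ℕ) : ℤ)) : ℝ) - (2 * ((((1:ℤ) + ((t-1:ℕ):ℤ)) : ℤ) : ℝ) - ((t:ℕ) : ℝ) + 1) / 2)
          = (k:ℝ)^2 + (1 - ((t:ℝ)+1)/2) * k := by
      intro k _
      push_cast [h3]; ring
    rw [Finset.sum_congr rfl h2, Finset.sum_add_distrib, sum_range_cast_sq, ← Finset.mul_sum,
      sum_range_cast]
    ring
  have hpos : (0:ℝ) < ((t:ℝ)-1)*t*((t:ℝ)+1) := by
    have h1 : (2:ℝ) ≤ t := by exact_mod_cast ht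
    have h2 : (0:ℝ) < (t:ℝ)-1 := by linarith
    have h3 : (0:ℝ) < (t:ℝ) := by linarith
    have h4 : (0:ℝ) < (t:ℝ)+1 := by linarith
    exact mul_pos (mul_pos h2 h3) h4
  unfold olsWeight
  push_cast at hnum hden ⊢
  rw [hnum, hden]
  field_simp
  ring

lemma den_pos (t : ℕ) (ht : 2 ≤ t) : (0:ℝ) < ((t:ℝ)-1)*t*((t:ℝ)+1) := by
  have h1 : (2:ℝ) ≤ t := by exact_mod_cast ht
  have h2 : (0:ℝ) < (t:ℝ)-1 := by linarith
  have h3 : (0:ℝ) < (t:ℝ) := by linarith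
  have h4 : (0:ℝ) < (t:ℝ)+1 := by linarith
  exact mul_pos (mul_pos h2 h3) h4

lemma olsWeight_nonneg (t i : ℕ) (ht : 2 ≤ t) (hi : 2 ≤ i) (hit : i ≤ t) :
    0 ≤ olsWeight t t i := by
  rw [olsWeight_eq t i ht hi hit]
  have h1 : (2:ℝ) ≤ t := by exact_mod_cast ht
  have h2 : (2:ℝ) ≤ i := by exact_mod_cast hi
  have h3 : (i:ℝ) ≤ t := by exact_mod_cast hit
  apply div_nonneg
  · nlinarith
  · exact (den_pos t ht).le

lemma olsWeight_le (t i : ℕ) (ht : 2 ≤ t) (hi : 2 ≤ i) (hit : i ≤ t) :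
    olsWeight t t i ≤ 2 / t := by
  rw [olsWeight_eq t i ht hi hit]
  have h1 : (2:ℝ) ≤ t := by exact_mod_cast ht
  have h2 : (2:ℝ) ≤ i := by exact_mod_cast hi
  have h3 : (i:ℝ) ≤ t := by exact_mod_cast hit
  have hp1 : (0:ℝ) < ((t:ℝ)-1)*t*((t:ℝ)+1) := den_pos t ht
  have hp2 : (0:ℝ) < (t:ℝ) := by linarith
  rw [div_le_div_iff₀ hp1 hp2]
  have hAB : 4*(((t:ℝ)-i+1)*((i:ℝ)-1)) ≤ (t:ℝ)^2 := by nlinarith [sq_nonneg ((t:ℝ)-2*(i:ℝ)+2)]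
  have ht4 : (4:ℝ) ≤ (t:ℝ)^2 := by nlinarith
  nlinarith [mul_le_mul_of_nonneg_right hAB hp2.le, mul_le_mul_of_nonneg_right ht4 hp2.le]


theorem stmt_17 {Ω : Type*} [MeasurableSpace Ω] (P : Measure Ω) [IsProbabilityMeasure P]
    (D : ℕ → Ω → ℝ) (hD : ∀ i, MemLp (D i) 2 P)
    (C : ℝ)
    (hC : ∀ t : ℕ, 2 ≤ t →
      ∑ i ∈ Finset.Icc 2 t, ∑ j ∈ Finset.Icc 2 t, |cov P (D i) (D j)| ≤ C) :
    Filter.Tendsto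
      (fun t : ℕ =>
        cov P (fun ω => ∑ i ∈ Finset.Icc 2 t, olsWeight (t : ℤ) t (i : ℤ) * D i ω)
              (fun ω => ∑ i ∈ Finset.Icc 2 t, olsWeight (t : ℤ) t (i : ℤ) * D i ω))
      Filter.atTop (nhds 0) := by
  classical
  have hDint : ∀ i, Integrable (D i) P := fun i => (hD i).integrable one_le_two
  set m : ℕ → ℝ := fun i => ∫ x, D i x ∂P with hm
  have hprod : ∀ i j, Integrable (fun ω => (D i ω - m i) * (D j ω - m j)) P := by
    intro i j
    have hi2 : MemLp (fun ω => D i ω - m i) 2 P := (hD i).sub (memLp_const (m i))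
    have hj2 : MemLp (fun ω => D j ω - m j) 2 P := (hD j).sub (memLp_const (m j))
    have hexp : (1:ENNReal)/1 = 1/2 + 1/2 := by
      rw [ENNReal.add_halves]; simp
    have := hj2.smul (r := 1) hi2
    exact memLp_one_iff_integrable.mp this
  have key : ∀ (w : ℕ → ℝ) (s : Finset ℕ),
      cov P (fun ω => ∑ i ∈ s, w i * D i ω) (fun ω => ∑ i ∈ s, w i * D i ω)
        = ∑ i ∈ s, ∑ j ∈ s, w i * w j * cov P (D i) (D j) := by
    intro w s
    have hmean : ∫ x, (∑ i ∈ s, w i * D i x) ∂P = ∑ i ∈ s, w i * m i := by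
      rw [integral_finset_sum _ (fun i _ => (hDint i).const_mul (w i))]
      exact Finset.sum_congr rfl fun i _ => integral_const_mul (w i) (D i)
    have hpt : ∀ ω : Ω, ((∑ i ∈ s, w i * D i ω) - ∫ x, (∑ i ∈ s, w i * D i x) ∂P) *
        ((∑ i ∈ s, w i * D i ω) - ∫ x, (∑ i ∈ s, w i * D i x) ∂P)
        = ∑ i ∈ s, ∑ j ∈ s, (w i * w j) * ((D i ω - m i) * (D j ω - m j)) := by
      intro ω
      rw [hmean, ← Finset.sum_sub_distrib, Finset.sum_mul_sum]
      refine Finset.sum_congr rfl fun i _ => Finset.sum_congr rfl fun j _ => ?_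
      ring
    unfold cov
    rw [MeasureTheory.integral_congr_ae (Filter.Eventually.of_forall hpt)]
    rw [integral_finset_sum _ (fun i _ =>
      integrable_finset_sum _ (fun j _ => ((hprod i j).const_mul _)))]
    refine Finset.sum_congr rfl fun i _ => ?_
    rw [integral_finset_sum _ (fun j _ => ((hprod i j).const_mul _))]
    refine Finset.sum_congr rfl fun j _ => ?_
    rw [integral_const_mul]
  have hC0 : 0 ≤ C :=
    le_trans (Finset.sum_nonneg fun i _ => Finset.sum_nonneg fun j _ => abs_nonneg _)
      (hC 2 le_rfl)
  apply squeeze_zero_norm' (a := fun t : ℕ => 4*C/t)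
    ?_ (tendsto_const_div_atTop_nhds_zero_nat (4*C))
  filter_upwards [Filter.eventually_ge_atTop 2] with t ht
  rw [key (fun i => olsWeight (t:ℤ) t (i:ℤ)) (Finset.Icc 2 t)]
  have htR : (2:ℝ) ≤ t := by exact_mod_cast ht
  have htpos : (0:ℝ) < t := by linarith
  have hwb : ∀ i ∈ Finset.Icc 2 t, 0 ≤ olsWeight (t:ℤ) t (i:ℤ) ∧
      olsWeight (t:ℤ) t (i:ℤ) ≤ 2 / t := by
    intro i hi
    rw [Finset.mem_Icc] at hi
    exact ⟨olsWeight_nonneg t i ht hi.1 hi.2, olsWeight_le t i ht hi.1 hi.2⟩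
  calc ‖∑ i ∈ Finset.Icc 2 t, ∑ j ∈ Finset.Icc 2 t,
        olsWeight (t:ℤ) t (i:ℤ) * olsWeight (t:ℤ) t (j:ℤ) * cov P (D i) (D j)‖
      ≤ ∑ i ∈ Finset.Icc 2 t, ∑ j ∈ Finset.Icc 2 t,
        (2/(t:ℝ)) * (2/(t:ℝ)) * |cov P (D i) (D j)| := by
        refine le_trans (norm_sum_le _ _) (Finset.sum_le_sum fun i hi => ?_)
        refine le_trans (norm_sum_le _ _) (Finset.sum_le_sum fun j hj => ?_)
        rw [Real.norm_eq_abs, abs_mul, abs_mul,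
          abs_of_nonneg (hwb i hi).1, abs_of_nonneg (hwb j hj).1]
        have h2t : (0:ℝ) ≤ 2/(t:ℝ) := by positivity
        exact mul_le_mul_of_nonneg_right
          (mul_le_mul (hwb i hi).2 (hwb j hj).2 (hwb j hj).1 h2t) (abs_nonneg _)
    _ = (2/(t:ℝ)) * (2/(t:ℝ)) * ∑ i ∈ Finset.Icc 2 t, ∑ j ∈ Finset.Icc 2 t,
        |cov P (D i) (D j)| := by
        rw [Finset.mul_sum]
        exact Finset.sum_congr rfl fun i _ => by rw [Finset.mul_sum]
    _ ≤ (2/(t:ℝ)) * (2/(t:ℝ)) * C := by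
        have : (0:ℝ) ≤ (2/(t:ℝ)) * (2/(t:ℝ)) := by positivity
        exact mul_le_mul_of_nonneg_left (hC t ht) this
    _ ≤ 4*C/t := by
        rw [div_mul_div_comm, div_mul_eq_mul_div, div_le_div_iff₀ (by positivity) htpos]
        nlinarith [mul_nonneg (mul_nonneg hC0 htpos.le) (by linarith : (0:ℝ) ≤ (t:ℝ)-1)]
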